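/- Let k be a field and F, D₁, D₂ division rings which are finite-dimensional k-algebras with dim_k D₁ = dim_k D₂ = dim_k F. Let φ : D₁ × D₂ → M₂(F) be an injective unital homomorphism of k-algebras. Then there exist an invertible matrix b ∈ GL₂(F) and k-algebra isomorphisms f₁ : D₁ → F and f₂ : D₂ → F such that b · φ(x, y) · b⁻¹ is the diagonal matrix [[f₁(x), 0], [0, f₂(y)]] for all (x, y) ∈ D₁ × D₂; in particular, φ is similar to the canonical embedding F × F → M₂(F) after identifying D₁ and D₂ with F. -/

import Mathlib

open Matrix

lemma aux_inv (F : Type*) [DivisionRing F] (v w : Fin 2 → F)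
    (h : LinearIndependent F ![v, w]) :
    ∃ Q : Matrix (Fin 2) (Fin 2) F,
      Matrix.of ![v, w] * Q = 1 ∧ Q * Matrix.of ![v, w] = 1 := by
  have hcard : Fintype.card (Fin 2) = Module.finrank F (Fin 2 → F) := by simp
  let B := basisOfLinearIndependentOfCardEqFinrank h hcard
  have hB : ⇑B = ![v, w] := coe_basisOfLinearIndependentOfCardEqFinrank h hcard
  have hPB : ∀ i j, Matrix.of ![v, w] i j = B i j := by intro i j; rw [hB]; rfl
  refine ⟨Matrix.of fun i j => B.repr (Pi.single i 1) j, ?_, ?_⟩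
  · ext j l
    have h1 : B j = ∑ m : Fin 2, (B j m) • (Pi.single m 1 : Fin 2 → F) := by
      funext t
      simp [Finset.sum_apply, Pi.single_apply, Fin.sum_univ_two, eq_comm]
    have h2 : B.repr (B j) l = ∑ m : Fin 2, B j m * B.repr (Pi.single m 1) l := by
      conv_lhs => rw [h1]
      rw [map_sum]
      simp [Finsupp.smul_apply]
    rw [Matrix.mul_apply]
    calc ∑ m, Matrix.of ![v, w] j m * Matrix.of (fun i j => B.repr (Pi.single i 1) j) m l
        = ∑ m, B j m * B.repr (Pi.single m 1) l := by
          refine Finset.sum_congr rfl fun m _ => ?_; rw [hPB]; rfl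
      _ = B.repr (B j) l := h2.symm
      _ = (Finsupp.single j (1:F)) l := by rw [B.repr_self]
      _ = (1 : Matrix (Fin 2) (Fin 2) F) j l := by
          simp [Matrix.one_apply, Finsupp.single_apply]
  · ext i kk
    have h1 : ∑ j : Fin 2, B.repr (Pi.single i 1) j • B j = (Pi.single i 1 : Fin 2 → F) :=
      B.sum_repr _
    have h2 := congrFun h1 kk
    rw [Finset.sum_apply] at h2
    rw [Matrix.mul_apply]
    calc ∑ j, Matrix.of (fun i j => B.repr (Pi.single i 1) j) i j * Matrix.of ![v, w] j kk
        = ∑ j, B.repr (Pi.single i 1) j * B j kk := by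
          refine Finset.sum_congr rfl fun j _ => ?_; rw [hPB]; rfl
      _ = (Pi.single i 1 : Fin 2 → F) kk := h2
      _ = (1 : Matrix (Fin 2) (Fin 2) F) i kk := by
          simp [Matrix.one_apply, Pi.single_apply, eq_comm]

set_option maxHeartbeats 1000000 in
/-- If `F, D₁, D₂` are division rings, finite-dimensional over a field `k`, of
equal `k`-dimension, then every injective unital `k`-algebra homomorphism
`D₁ × D₂ → M₂(F)` is conjugate to the canonical diagonal embedding, after identifying
`D₁` and `D₂` with `F` by suitable `k`-algebra isomorphisms. -/
theorem prod_division_rings_to_matrix_conjugate_to_canonical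
    (k F D₁ D₂ : Type*) [Field k]
    [DivisionRing F] [Algebra k F] [FiniteDimensional k F]
    [DivisionRing D₁] [Algebra k D₁] [FiniteDimensional k D₁]
    [DivisionRing D₂] [Algebra k D₂] [FiniteDimensional k D₂]
    (h₁ : Module.finrank k D₁ = Module.finrank k F)
    (h₂ : Module.finrank k D₂ = Module.finrank k F)
    (φ : (D₁ × D₂) →ₐ[k] Matrix (Fin 2) (Fin 2) F)
    (hφ : Function.Injective φ) :
    ∃ (b : (Matrix (Fin 2) (Fin 2) F)ˣ) (f₁ : D₁ ≃ₐ[k] F) (f₂ : D₂ ≃ₐ[k] F),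
      ∀ (x : D₁) (y : D₂),
        b.val * φ (x, y) * (b⁻¹).val = !![f₁ x, 0; 0, f₂ y] := by
  classical
  set e : Matrix (Fin 2) (Fin 2) F := φ (1, 0) with he_def
  have hee : e * e = e := by
    rw [he_def, ← _root_.map_mul φ (1,0) (1,0)]
    congr 1
    simp [Prod.mk_mul_mk]
  have he0 : e ≠ 0 := by
    intro h
    have : ((1 : D₁), (0 : D₂)) = (0, 0) := hφ (by rw [← he_def, h, ← map_zero φ]; rfl)
    exact one_ne_zero (congrArg Prod.fst this)
  have he1 : e ≠ 1 := by
    intro h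
    have : ((1 : D₁), (0 : D₂)) = (1, 1) := hφ (by rw [← he_def, h, ← _root_.map_one φ]; rfl)
    exact zero_ne_one (congrArg Prod.snd this)
  obtain ⟨i₀, hv0⟩ : ∃ i, e i ≠ 0 := by
    by_contra h
    push_neg at h
    exact he0 (by ext i j; rw [congrFun (h i) j]; rfl)
  obtain ⟨i₁, hw0⟩ : ∃ i, (1 - e) i ≠ 0 := by
    by_contra h
    push_neg at h
    apply he1
    have h2 : (1 : Matrix (Fin 2) (Fin 2) F) - e = 0 := by
      ext i j; rw [congrFun (h i) j]; rfl
    linear_combination (norm := abel) -h2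
  set v : Fin 2 → F := e i₀ with hv_def
  set w : Fin 2 → F := (1 - e) i₁ with hw_def
  have hrow : ∀ (M N : Matrix (Fin 2) (Fin 2) F) i, (M * N) i = M i ᵥ* N := by
    intro M N i
    funext j
    rw [Matrix.mul_apply]
    rfl
  have hve : v ᵥ* e = v := by
    rw [hv_def, ← hrow e e i₀, hee]
  have hwe : w ᵥ* e = 0 := by
    rw [hw_def, ← hrow (1 - e) e i₁]
    have h2 : (1 - e) * e = 0 := by
      rw [sub_mul, one_mul, hee, sub_self]
    rw [h2]
    rfl
  have hli : LinearIndependent F ![v, w] := by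
    rw [LinearIndependent.pair_iff]
    intro s t hst
    have h2 := congrArg (· ᵥ* e) hst
    simp only [Matrix.add_vecMul, Matrix.smul_vecMul, hve, hwe, smul_zero, add_zero,
      Matrix.zero_vecMul] at h2
    have hs : s = 0 := by
      rcases smul_eq_zero.mp h2 with h | h
      · exact h
      · exact absurd h hv0
    refine ⟨hs, ?_⟩
    rw [hs, zero_smul, zero_add] at hst
    rcases smul_eq_zero.mp hst with h | h
    · exact h
    · exact absurd h hw0
  set P : Matrix (Fin 2) (Fin 2) F := Matrix.of ![v, w] with hP_def
  obtain ⟨Q, hPQ0, hQP0⟩ := aux_inv F v w hli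
  have hPQ : P * Q = 1 := hPQ0
  have hQP : Q * P = 1 := hQP0
  have hP0 : P 0 = v := rfl
  have hP1 : P 1 = w := rfl
  have hQPX : ∀ X : Matrix (Fin 2) (Fin 2) F, Q * (P * X) = X := by
    intro X
    rw [← mul_assoc, hQP, one_mul]
  have hE1 : P * e * Q = !![1, 0; 0, 0] := by
    have r0 : (P * e * Q) 0 = (1 : Matrix (Fin 2) (Fin 2) F) 0 := by
      rw [hrow (P * e) Q 0, hrow P e 0, hP0, hve, ← hP0, ← hrow P Q 0, hPQ]
    have r1 : (P * e * Q) 1 = 0 := by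
      rw [hrow (P * e) Q 1, hrow P e 1, hP1, hwe, Matrix.zero_vecMul]
    refine Matrix.ext fun i j => ?_
    fin_cases i
    · show (P * e * Q) 0 j = !![(1:F), 0; 0, 0] 0 j
      rw [congrFun r0 j]
      fin_cases j <;> simp [Matrix.one_apply]
    · show (P * e * Q) 1 j = !![(1:F), 0; 0, 0] 1 j
      rw [congrFun r1 j]
      fin_cases j <;> simp
  have hφ01 : φ (0, 1) = 1 - e := by
    have h2 : ((0 : D₁), (1 : D₂)) = (1, 1) - (1, 0) := by simp [Prod.ext_iff]
    rw [h2, _root_.map_sub φ, show ((1:D₁),(1:D₂)) = (1 : D₁ × D₂) from rfl, _root_.map_one φ, he_def]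
  have hE2 : P * φ (0, 1) * Q = !![0, 0; 0, 1] := by
    rw [hφ01, mul_sub, mul_one, sub_mul, hPQ, hE1]
    refine Matrix.ext fun i j => ?_
    fin_cases i <;> fin_cases j <;> simp [Matrix.one_fin_two]
  have hcorner1 : ∀ M : Matrix (Fin 2) (Fin 2) F,
      !![1, 0; 0, 0] * M * !![1, 0; 0, 0] = !![M 0 0, 0; 0, 0] := by
    intro M
    conv_lhs => rw [Matrix.eta_fin_two M]
    rw [Matrix.mul_fin_two, Matrix.mul_fin_two]
    simp
  have hcorner2 : ∀ M : Matrix (Fin 2) (Fin 2) F,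
      !![0, 0; 0, 1] * M * !![0, 0; 0, 1] = !![0, 0; 0, M 1 1] := by
    intro M
    conv_lhs => rw [Matrix.eta_fin_two M]
    rw [Matrix.mul_fin_two, Matrix.mul_fin_two]
    simp
  set f1 : D₁ → F := fun x => (P * φ (x, 0) * Q) 0 0 with hf1_def
  set f2 : D₂ → F := fun y => (P * φ (0, y) * Q) 1 1 with hf2_def
  have hψ1 : ∀ x : D₁, P * φ (x, 0) * Q = !![f1 x, 0; 0, 0] := by
    intro x
    have hxe : φ (x, 0) = e * φ (x, 0) * e := by
      rw [he_def, ← _root_.map_mul φ, ← _root_.map_mul φ]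
      congr 1
      simp [Prod.mk_mul_mk]
    calc P * φ (x, 0) * Q
        = (P * e * Q) * (P * φ (x, 0) * Q) * (P * e * Q) := by
          conv_lhs => rw [hxe]
          simp only [mul_assoc, hQPX]
      _ = !![f1 x, 0; 0, 0] := by
          rw [hE1, hcorner1]
  have hψ2 : ∀ y : D₂, P * φ (0, y) * Q = !![0, 0; 0, f2 y] := by
    intro y
    have hye : φ (0, y) = φ (0, 1) * φ (0, y) * φ (0, 1) := by
      rw [← _root_.map_mul φ, ← _root_.map_mul φ]
      congr 1
      simp [Prod.mk_mul_mk]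
    calc P * φ (0, y) * Q
        = (P * φ (0,1) * Q) * (P * φ (0, y) * Q) * (P * φ (0,1) * Q) := by
          conv_lhs => rw [hye]
          simp only [mul_assoc, hQPX]
      _ = !![0, 0; 0, f2 y] := by
          rw [hE2, hcorner2]
  -- f1 is a ring hom
  have hf1_one : f1 1 = 1 := by
    have := congrFun (congrFun (hψ1 1) 0) 0
    have h2 : P * φ ((1:D₁), (0:D₂)) * Q = !![1,0;0,0] := by rw [← he_def]; exact hE1
    rw [h2] at this
    simpa using this.symm
  have hf1_mul : ∀ x y : D₁, f1 (x * y) = f1 x * f1 y := by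
    intro x y
    have hmul : φ ((x*y : D₁), (0:D₂)) = φ (x,0) * φ (y,0) := by
      rw [← _root_.map_mul φ]
      congr 1
      simp [Prod.mk_mul_mk]
    have h2 : P * φ ((x*y : D₁), (0:D₂)) * Q
        = (P * φ (x,0) * Q) * (P * φ (y,0) * Q) := by
      rw [hmul]
      simp only [mul_assoc, hQPX]
    rw [hψ1 x, hψ1 y, Matrix.mul_fin_two] at h2
    have h3 := congrFun (congrFun ((hψ1 (x*y)).symm.trans h2) 0) 0
    simpa using h3
  have hf1_add : ∀ x y : D₁, f1 (x + y) = f1 x + f1 y := by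
    intro x y
    have hadd : φ ((x + y : D₁), (0:D₂)) = φ (x,0) + φ (y,0) := by
      rw [← _root_.map_add φ]
      congr 1
      simp
    have h2 : P * φ ((x + y : D₁), (0:D₂)) * Q
        = P * φ (x,0) * Q + P * φ (y,0) * Q := by
      rw [hadd, mul_add, add_mul]
    have h3 := congrFun (congrFun h2 0) 0
    simpa [hf1_def] using h3
  have hf1_zero : f1 0 = 0 := by
    have : φ ((0:D₁), (0:D₂)) = 0 := by rw [show ((0:D₁),(0:D₂)) = 0 from rfl, map_zero]
    simp [hf1_def, this]
  have hf1_smul : ∀ (c : k) (x : D₁), f1 (c • x) = c • f1 x := by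
    intro c x
    have hs : φ ((c • x : D₁), (0:D₂)) = c • φ (x, 0) := by
      rw [← _root_.map_smul φ]
      congr 1
      simp [Prod.smul_mk]
    have h2 : P * φ ((c • x : D₁), (0:D₂)) * Q = c • (P * φ (x,0) * Q) := by
      rw [hs, Matrix.mul_smul, Matrix.smul_mul]
    have h3 := congrFun (congrFun h2 0) 0
    simpa [hf1_def] using h3
  -- f2 is a ring hom
  have hf2_one : f2 1 = 1 := by
    have := congrFun (congrFun (hψ2 1) 1) 1
    rw [hE2] at this
    simpa using this.symm
  have hf2_mul : ∀ x y : D₂, f2 (x * y) = f2 x * f2 y := by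
    intro x y
    have hmul : φ ((0:D₁), (x*y : D₂)) = φ (0,x) * φ (0,y) := by
      rw [← _root_.map_mul φ]
      congr 1
      simp [Prod.mk_mul_mk]
    have h2 : P * φ ((0:D₁), (x*y : D₂)) * Q
        = (P * φ (0,x) * Q) * (P * φ (0,y) * Q) := by
      rw [hmul]
      simp only [mul_assoc, hQPX]
    rw [hψ2 x, hψ2 y, Matrix.mul_fin_two] at h2
    have h3 := congrFun (congrFun ((hψ2 (x*y)).symm.trans h2) 1) 1
    simpa using h3
  have hf2_add : ∀ x y : D₂, f2 (x + y) = f2 x + f2 y := by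
    intro x y
    have hadd : φ ((0:D₁), (x + y : D₂)) = φ (0,x) + φ (0,y) := by
      rw [← _root_.map_add φ]
      congr 1
      simp
    have h2 : P * φ ((0:D₁), (x + y : D₂)) * Q
        = P * φ (0,x) * Q + P * φ (0,y) * Q := by
      rw [hadd, mul_add, add_mul]
    have h3 := congrFun (congrFun h2 1) 1
    simpa [hf2_def] using h3
  have hf2_zero : f2 0 = 0 := by
    have : φ ((0:D₁), (0:D₂)) = 0 := by rw [show ((0:D₁),(0:D₂)) = 0 from rfl, map_zero]
    simp [hf2_def, this]
  have hf2_smul : ∀ (c : k) (x : D₂), f2 (c • x) = c • f2 x := by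
    intro c x
    have hs : φ ((0:D₁), (c • x : D₂)) = c • φ (0, x) := by
      rw [← _root_.map_smul φ]
      congr 1
      simp [Prod.smul_mk]
    have h2 : P * φ ((0:D₁), (c • x : D₂)) * Q = c • (P * φ (0,x) * Q) := by
      rw [hs, Matrix.mul_smul, Matrix.smul_mul]
    have h3 := congrFun (congrFun h2 1) 1
    simpa [hf2_def] using h3
  -- package as algebra homs
  let f1hom : D₁ →ₐ[k] F :=
    AlgHom.mk' ⟨⟨⟨f1, hf1_one⟩, hf1_mul⟩, hf1_zero, hf1_add⟩ hf1_smul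
  let f2hom : D₂ →ₐ[k] F :=
    AlgHom.mk' ⟨⟨⟨f2, hf2_one⟩, hf2_mul⟩, hf2_zero, hf2_add⟩ hf2_smul
  have hf1_inj : Function.Injective f1hom := by
    intro x y hxy
    have h0 : f1 (x - y) = 0 := by
      have : f1 x = f1 y := hxy
      have hsub := hf1_add (x - y) y
      rw [sub_add_cancel, this] at hsub
      exact right_eq_add.mp hsub
    have hz : P * φ ((x - y : D₁), (0:D₂)) * Q = 0 := by
      rw [hψ1, h0]
      refine Matrix.ext fun i j => ?_
      fin_cases i <;> fin_cases j <;> simp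
    have hφz : φ ((x - y : D₁), (0:D₂)) = 0 := by
      have h4 := congrArg (fun M => Q * M * P) hz
      simp only [mul_zero, zero_mul, mul_assoc, hQP, mul_one, hQPX] at h4
      exact h4
    have : ((x - y : D₁), (0:D₂)) = 0 := hφ (by rw [hφz, map_zero])
    have := congrArg Prod.fst this
    simpa [sub_eq_zero] using this
  have hf2_inj : Function.Injective f2hom := by
    intro x y hxy
    have h0 : f2 (x - y) = 0 := by
      have : f2 x = f2 y := hxy
      have hsub := hf2_add (x - y) y
      rw [sub_add_cancel, this] at hsub
      exact right_eq_add.mp hsub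
    have hz : P * φ ((0:D₁), (x - y : D₂)) * Q = 0 := by
      rw [hψ2, h0]
      refine Matrix.ext fun i j => ?_
      fin_cases i <;> fin_cases j <;> simp
    have hφz : φ ((0:D₁), (x - y : D₂)) = 0 := by
      have h4 := congrArg (fun M => Q * M * P) hz
      simp only [mul_zero, zero_mul, mul_assoc, hQP, mul_one, hQPX] at h4
      exact h4
    have : ((0:D₁), (x - y : D₂)) = 0 := hφ (by rw [hφz, map_zero])
    have := congrArg Prod.snd this
    simpa [sub_eq_zero] using this
  have hf1_surj : Function.Surjective f1hom :=
    (LinearMap.injective_iff_surjective_of_finrank_eq_finrank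
      (f := f1hom.toLinearMap) h₁).mp hf1_inj
  have hf2_surj : Function.Surjective f2hom :=
    (LinearMap.injective_iff_surjective_of_finrank_eq_finrank
      (f := f2hom.toLinearMap) h₂).mp hf2_inj
  refine ⟨⟨P, Q, hPQ, hQP⟩, AlgEquiv.ofBijective f1hom ⟨hf1_inj, hf1_surj⟩,
    AlgEquiv.ofBijective f2hom ⟨hf2_inj, hf2_surj⟩, ?_⟩
  intro x y
  simp only [Units.inv_mk, Units.val_mk]
  have hsplit : φ (x, y) = φ (x, 0) + φ (0, y) := by
    rw [← _root_.map_add φ]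
    congr 1
    simp
  rw [hsplit, mul_add, add_mul, hψ1, hψ2]
  have hco1 : (AlgEquiv.ofBijective f1hom ⟨hf1_inj, hf1_surj⟩) x = f1 x := rfl
  have hco2 : (AlgEquiv.ofBijective f2hom ⟨hf2_inj, hf2_surj⟩) y = f2 y := rfl
  rw [hco1, hco2]
  refine Matrix.ext fun i j => ?_
  fin_cases i <;> fin_cases j <;> simp
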